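/- If n, i, j, k are natural numbers with n, i, j, k ≥ 1, q is an odd prime, and q^i divides n, then q^(i+j) divides C(n,k) · (q^j)^k. Moreover, if k ≥ 2, then q^(i+j+1) divides C(n,k) · (q^j)^k. -/

import Mathlib

lemma aux_pow3 : ∀ b : ℕ, 1 ≤ b → b + 2 ≤ 3 ^ b := by
  intro b hb
  induction b with
  | zero => omega
  | succ m ih =>
    rcases Nat.eq_zero_or_pos m with rfl | hm
    · norm_num
    · have := ih hm
      have : 3 ^ (m+1) = 3 * 3 ^ m := by ring
      omega

theorem stmt4 (n i j k q : ℕ) (hn : 1 ≤ n) (hi : 1 ≤ i) (hj : 1 ≤ j) (hk : 1 ≤ k)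
    (hq : q.Prime) (hodd : Odd q) (hdvd : q ^ i ∣ n) :
    q ^ (i + j) ∣ Nat.choose n k * (q ^ j) ^ k ∧
    (2 ≤ k → q ^ (i + j + 1) ∣ Nat.choose n k * (q ^ j) ^ k) := by
  rcases le_or_gt k n with hkn | hkn
  swap
  · simp [Nat.choose_eq_zero_of_lt hkn]
  have hq3 : 3 ≤ q := by
    have h2 := hq.two_le
    rcases hodd with ⟨m, rfl⟩
    omega
  have hc : 0 < n.choose k := Nat.choose_pos hkn
  set a := (n.choose k).factorization q with ha
  set b := k.factorization q with hb
  have hid : n * (n-1).choose (k-1) = n.choose k * k := by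
    have := Nat.add_one_mul_choose_eq (n-1) (k-1)
    have h1 : n - 1 + 1 = n := by omega
    have h2 : k - 1 + 1 = k := by omega
    rw [h1, h2] at this
    exact this
  have hnck : q ^ i ∣ n.choose k * k := hid ▸ hdvd.mul_right _
  have hck0 : n.choose k * k ≠ 0 := by positivity
  have hiab : i ≤ a + b := by
    have := (Nat.Prime.pow_dvd_iff_le_factorization hq hck0).mp hnck
    rwa [Nat.factorization_mul (by omega) (by omega), Finsupp.add_apply] at this
  have hqb : q ^ b ∣ k := Nat.ordProj_dvd k q
  have hqbk : q ^ b ≤ k := Nat.le_of_dvd (by omega) hqb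
  have h3b : 3 ^ b ≤ q ^ b := Nat.pow_le_pow_left hq3 b
  have hblt : b < k := lt_of_lt_of_le (Nat.lt_pow_self (n := b) (by omega)) (le_trans h3b hqbk)
  have hqa : q ^ a ∣ n.choose k := Nat.ordProj_dvd _ q
  have key : ∀ m : ℕ, m ≤ a + j * k → q ^ m ∣ n.choose k * (q ^ j) ^ k := by
    intro m hm
    rw [← pow_mul]
    calc q ^ m ∣ q ^ (a + j * k) := pow_dvd_pow q hm
    _ = q ^ a * q ^ (j * k) := pow_add q a (j*k)
    _ ∣ n.choose k * q ^ (j * k) := mul_dvd_mul_right hqa _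
  obtain ⟨k', rfl⟩ : ∃ k', k = k' + 1 := ⟨k - 1, by omega⟩
  have hjk : j * (k' + 1) = j * k' + j := by ring
  have hk'j : k' ≤ j * k' := Nat.le_mul_of_pos_left _ (by omega)
  constructor
  · apply key; omega
  · intro hk2
    apply key
    have hbk2 : b + 1 ≤ k' := by
      rcases Nat.eq_zero_or_pos b with hb0 | hb1
      · omega
      · have := aux_pow3 b hb1
        omega
    omega
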